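/- The CDCL transition graph Γₙ is acyclic: there is no cyclic sequence of states S₀ ⟹ S₁ ⟹ ⋯ ⟹ S_m = S₀ with m ≥ 1 in the basic CDCL model. -/

import Mathlib

abbrev Var := ℕ
abbrev Lit := Var × Bool
abbrev Clause := Finset Lit

def Clause.vars (C : Clause) : Finset Var := C.image Prod.fst

abbrev Assignment := Var → Option Bool

def litSat (σ : Assignment) (l : Lit) : Prop := σ l.1 = some l.2
def litFalse (σ : Assignment) (l : Lit) : Prop := σ l.1 = some (!l.2)

def Clause.falsified (σ : Assignment) (C : Clause) : Prop := ∀ l ∈ C, litFalse σ l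

def resolve (x : Var) (C D : Clause) : Clause :=
  C.filter (fun l => l.1 ≠ x) ∪ D.filter (fun l => l.1 ≠ x)

def resolvableOn (x : Var) (C D : Clause) : Prop :=
  (∃ a : Bool, (x, a) ∈ C ∧ (x, !a) ∈ D) ∧
    ∀ (y : Var) (b : Bool), y ≠ x → (y, b) ∈ C → (y, !b) ∉ D
abbrev TEntry := Var × Bool × Bool

abbrev Trail := List TEntry

def Trail.assign (t : Trail) : Assignment :=
  fun x => (t.find? (fun e => e.1 == x)).map (fun e => e.2.1)

def Trail.varList (t : Trail) : List Var := t.map (fun e => e.1)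

def restrictedIsUnit (σ : Assignment) (C : Clause) (l : Lit) : Prop :=
  l ∈ C ∧ σ l.1 = none ∧ ∀ m ∈ C, m ≠ l → litFalse σ m

structure CState where
  clauses : Finset Clause
  trail : Trail

/-- Transitions of the basic CDCL model: decision/unit-propagation actions append an
assignment on a fresh variable to the trail, and learning actions add a new clause
and replace the trail by one of its prefixes. -/
inductive CStep : CState → CState → Prop
  | extend (𝒞 : Finset Clause) (t : Trail) (e : TEntry)
      (h : e.1 ∉ Trail.varList t) : CStep ⟨𝒞, t⟩ ⟨𝒞, t ++ [e]⟩
  | learn (𝒞 : Finset Clause) (t : Trail) (C : Clause) (hC : C ∉ 𝒞)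
      (t' : Trail) (h : t' <+: t) : CStep ⟨𝒞, t⟩ ⟨insert C 𝒞, t'⟩

lemma cstep_lex {S T : CState} (h : CStep S T) :
    Prod.Lex (· < ·) (· < ·) (S.clauses.card, S.trail.length)
      (T.clauses.card, T.trail.length) := by
  cases h with
  | extend 𝒞 t e he => exact Prod.Lex.right _ (by simp)
  | learn 𝒞 t C hC t' ht =>
      exact Prod.Lex.left _ _ (by simp [Finset.card_insert_of_notMem hC])

theorem stmt_17 : ∀ S : CState, ¬ Relation.TransGen CStep S S := by
  intro S h
  have wf : WellFounded (InvImage (Prod.Lex (· < ·) (· < ·))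
      (fun S : CState => (S.clauses.card, S.trail.length))) :=
    InvImage.wf _ (WellFounded.prod_lex (Nat.lt_wfRel.wf) (Nat.lt_wfRel.wf))
  have wf2 := wf.transGen
  have h2 := Relation.TransGen.mono (p := InvImage (Prod.Lex (· < ·) (· < ·))
      (fun S : CState => (S.clauses.card, S.trail.length))) (fun a b hab => cstep_lex hab) S S h
  exact wf2.asymmetric _ _ h2 h2
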